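/- arXiv:1510.08085 — 2 statements merged into one kernel-verified Lean document; each statement's English description precedes it below -/
import Mathlib

section
/- Let {ψᵢ¹ ⊗ ψᵢ² : i = 1…d} be an orthonormal product basis of ℂ^{d₁} ⊗ ℂ^{d₂}, d = d₁d₂, where ψᵢ¹ ∈ ℂ^{d₁} and ψᵢ² ∈ ℂ^{d₂} are unit vectors. Then for any unit vector μ¹ ∈ ℂ^{d₁} one has Σ_{i=1}^{d} |⟨ψᵢ¹, μ¹⟩|² = d₂, and for any unit vector μ² ∈ ℂ^{d₂} one has Σ_{i=1}^{d} |⟨ψᵢ², μ²⟩|² = d₁. -/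
open scoped ComplexInnerProductSpace

/-- The tensor product of two vectors, realized concretely on `EuclideanSpace`:
`(a ⊗ b) (i, j) = a i * b j`. -/
noncomputable def eprod {ι γ : Type*} (a : EuclideanSpace ℂ ι) (b : EuclideanSpace ℂ γ) :
    EuclideanSpace ℂ (ι × γ) :=
  WithLp.toLp 2 (fun p : ι × γ => a p.1 * b p.2)

lemma eprod_inner {ι γ : Type*} [Fintype ι] [Fintype γ]
    (a c : EuclideanSpace ℂ ι) (b e : EuclideanSpace ℂ γ) :
    ⟪eprod a b, eprod c e⟫ = ⟪a, c⟫ * ⟪b, e⟫ := by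
  simp only [EuclideanSpace.inner_eq_star_dotProduct]
  simp [dotProduct, eprod, Finset.sum_mul_sum, Fintype.sum_prod_type,
    mul_mul_mul_comm]

lemma parseval {ι E : Type*} [Fintype ι] [NormedAddCommGroup E]
    [InnerProductSpace ℂ E] (b : OrthonormalBasis ι ℂ E) (x : E) :
    ∑ i, ‖⟪b i, x⟫‖ ^ 2 = ‖x‖ ^ 2 := by
  have h := b.sum_inner_mul_inner x x
  have heq : ∀ i, ⟪x, b i⟫ * ⟪b i, x⟫ = (‖⟪b i, x⟫‖ : ℂ) ^ 2 := by
    intro i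
    rw [← inner_conj_symm (b i) x, Complex.mul_conj]
    rw [Complex.normSq_eq_norm_sq]
    push_cast
    simp only [RCLike.norm_conj]
  simp_rw [heq, inner_self_eq_norm_sq_to_K] at h
  have h2 : ((∑ i, ‖⟪b i, x⟫‖ ^ 2 : ℝ) : ℂ) = ((‖x‖ ^ 2 : ℝ) : ℂ) := by
    push_cast
    exact h
  exact_mod_cast h2

/-- For an orthonormal product basis `{ψᵢ¹ ⊗ ψᵢ² : i = 1…d}` of `ℂ^{d₁} ⊗ ℂ^{d₂}`,
`d = d₁d₂`, and any unit vectors `μ¹ ∈ ℂ^{d₁}`, `μ² ∈ ℂ^{d₂}`, one has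
`Σᵢ |⟨ψᵢ¹, μ¹⟩|² = d₂` and `Σᵢ |⟨ψᵢ², μ²⟩|² = d₁`. -/
theorem product_basis_overlap_sums {d₁ d₂ : ℕ} (hd₁ : 0 < d₁) (hd₂ : 0 < d₂)
    (ψ₁ : Fin (d₁ * d₂) → EuclideanSpace ℂ (Fin d₁))
    (ψ₂ : Fin (d₁ * d₂) → EuclideanSpace ℂ (Fin d₂))
    (hψ₁ : ∀ i, ‖ψ₁ i‖ = 1) (hψ₂ : ∀ i, ‖ψ₂ i‖ = 1)
    (hB : Orthonormal ℂ (fun i => eprod (ψ₁ i) (ψ₂ i))) :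
    (∀ μ₁ : EuclideanSpace ℂ (Fin d₁), ‖μ₁‖ = 1 →
        ∑ i, ‖⟪ψ₁ i, μ₁⟫‖ ^ 2 = (d₂ : ℝ)) ∧
    (∀ μ₂ : EuclideanSpace ℂ (Fin d₂), ‖μ₂‖ = 1 →
        ∑ i, ‖⟪ψ₂ i, μ₂⟫‖ ^ 2 = (d₁ : ℝ)) := by
  have hne : Nonempty (Fin (d₁ * d₂)) := ⟨⟨0, Nat.mul_pos hd₁ hd₂⟩⟩
  have hcard : Fintype.card (Fin (d₁ * d₂)) =
      Module.finrank ℂ (EuclideanSpace ℂ (Fin d₁ × Fin d₂)) := by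
    simp
  let Bb := basisOfOrthonormalOfCardEqFinrank hB hcard
  have hBb : Orthonormal ℂ Bb := by
    rwa [coe_basisOfOrthonormalOfCardEqFinrank]
  let B : OrthonormalBasis (Fin (d₁ * d₂)) ℂ (EuclideanSpace ℂ (Fin d₁ × Fin d₂)) :=
    Bb.toOrthonormalBasis hBb
  have hBapp : ∀ i, B i = eprod (ψ₁ i) (ψ₂ i) := by
    intro i
    simp [B, Bb, Module.Basis.coe_toOrthonormalBasis, coe_basisOfOrthonormalOfCardEqFinrank]
  -- Parseval in the small spaces with the standard bases
  let e₁ : OrthonormalBasis (Fin d₁) ℂ (EuclideanSpace ℂ (Fin d₁)) :=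
    EuclideanSpace.basisFun (Fin d₁) ℂ
  let e₂ : OrthonormalBasis (Fin d₂) ℂ (EuclideanSpace ℂ (Fin d₂)) :=
    EuclideanSpace.basisFun (Fin d₂) ℂ
  constructor
  · intro μ₁ hμ₁
    have key : ∀ j : Fin d₂,
        ∑ i, ‖⟪ψ₁ i, μ₁⟫‖ ^ 2 * ‖⟪ψ₂ i, e₂ j⟫‖ ^ 2 = 1 := by
      intro j
      have hx : ‖eprod μ₁ (e₂ j)‖ = 1 := by
        have : ⟪eprod μ₁ (e₂ j), eprod μ₁ (e₂ j)⟫ = 1 := by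
          rw [eprod_inner, inner_self_eq_norm_sq_to_K, inner_self_eq_norm_sq_to_K,
            hμ₁, e₂.orthonormal.1 j]
          norm_num
        have := congrArg Complex.re this
        rw [inner_self_eq_norm_sq_to_K] at this
        nlinarith [norm_nonneg (eprod μ₁ (e₂ j)), Complex.one_re,
          (by exact_mod_cast this : ‖eprod μ₁ (e₂ j)‖ ^ 2 = 1)]
      have hp := parseval B (eprod μ₁ (e₂ j))
      rw [hx] at hp
      simp only [hBapp, eprod_inner, norm_mul, mul_pow] at hp
      simpa using hp
    calc ∑ i, ‖⟪ψ₁ i, μ₁⟫‖ ^ 2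
        = ∑ i, ‖⟪ψ₁ i, μ₁⟫‖ ^ 2 * ∑ j, ‖⟪ψ₂ i, e₂ j⟫‖ ^ 2 := by
          refine Finset.sum_congr rfl fun i _ => ?_
          have : ∑ j, ‖⟪e₂ j, ψ₂ i⟫‖ ^ 2 = ‖ψ₂ i‖ ^ 2 := parseval e₂ (ψ₂ i)
          simp_rw [← norm_inner_symm (ψ₂ i)] at this
          rw [this, hψ₂]; ring
      _ = ∑ j, ∑ i, ‖⟪ψ₁ i, μ₁⟫‖ ^ 2 * ‖⟪ψ₂ i, e₂ j⟫‖ ^ 2 := by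
          rw [Finset.sum_comm]
          simp [Finset.mul_sum]
      _ = ∑ j : Fin d₂, (1 : ℝ) := by simp_rw [key]
      _ = (d₂ : ℝ) := by simp
  · intro μ₂ hμ₂
    have key : ∀ j : Fin d₁,
        ∑ i, ‖⟪ψ₁ i, e₁ j⟫‖ ^ 2 * ‖⟪ψ₂ i, μ₂⟫‖ ^ 2 = 1 := by
      intro j
      have hx : ‖eprod (e₁ j) μ₂‖ = 1 := by
        have : ⟪eprod (e₁ j) μ₂, eprod (e₁ j) μ₂⟫ = 1 := by
          rw [eprod_inner, inner_self_eq_norm_sq_to_K, inner_self_eq_norm_sq_to_K,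
            hμ₂, e₁.orthonormal.1 j]
          norm_num
        have := congrArg Complex.re this
        rw [inner_self_eq_norm_sq_to_K] at this
        nlinarith [norm_nonneg (eprod (e₁ j) μ₂), Complex.one_re,
          (by exact_mod_cast this : ‖eprod (e₁ j) μ₂‖ ^ 2 = 1)]
      have hp := parseval B (eprod (e₁ j) μ₂)
      rw [hx] at hp
      simp only [hBapp, eprod_inner, norm_mul, mul_pow] at hp
      simpa using hp
    calc ∑ i, ‖⟪ψ₂ i, μ₂⟫‖ ^ 2
        = ∑ i, (∑ j, ‖⟪ψ₁ i, e₁ j⟫‖ ^ 2) * ‖⟪ψ₂ i, μ₂⟫‖ ^ 2 := by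
          refine Finset.sum_congr rfl fun i _ => ?_
          have : ∑ j, ‖⟪e₁ j, ψ₁ i⟫‖ ^ 2 = ‖ψ₁ i‖ ^ 2 := parseval e₁ (ψ₁ i)
          simp_rw [← norm_inner_symm (ψ₁ i)] at this
          rw [this, hψ₁]; ring
      _ = ∑ j, ∑ i, ‖⟪ψ₁ i, e₁ j⟫‖ ^ 2 * ‖⟪ψ₂ i, μ₂⟫‖ ^ 2 := by
          rw [Finset.sum_comm]
          simp [Finset.sum_mul]
      _ = ∑ j : Fin d₁, (1 : ℝ) := by simp_rw [key]
      _ = (d₁ : ℝ) := by simp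
end

section
/- Let {aᵢ ⊗ bᵢ : i = 1…d} be an orthonormal product basis of ℂ³ ⊗ ℂ^{d₂}, d = 3d₂. Then for every index κ ∈ {1…d} there exist indices λ, ν ∈ {1…d} such that {a_κ, a_λ, a_ν} is an orthonormal basis of ℂ³. -/
open scoped ComplexInnerProductSpace

lemma inner_eprod {ι γ : Type*} [Fintype ι] [Fintype γ]
    (a c : EuclideanSpace ℂ ι) (b d : EuclideanSpace ℂ γ) :
    ⟪eprod a b, eprod c d⟫ = ⟪a, c⟫ * ⟪b, d⟫ := by
  simp only [eprod, WithLp.ofLp_toLp, PiLp.inner_apply, RCLike.inner_apply, Fintype.sum_prod_type, map_mul]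
  rw [Finset.sum_mul_sum]
  exact Finset.sum_congr rfl fun i _ => Finset.sum_congr rfl fun j _ => by ring

/-- For an orthonormal product basis `{aᵢ ⊗ bᵢ : i = 1…d}` of `ℂ³ ⊗ ℂ^{d₂}`, `d = 3d₂`,
and every index `κ`, there are indices `λ, ν` such that `{a_κ, a_λ, a_ν}` is an
orthonormal basis of `ℂ³`. -/
theorem qutrit_factor_contains_orthonormal_basis {d₂ : ℕ} (hd₂ : 0 < d₂)
    (a : Fin (3 * d₂) → EuclideanSpace ℂ (Fin 3))
    (b : Fin (3 * d₂) → EuclideanSpace ℂ (Fin d₂))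
    (ha : ∀ i, ‖a i‖ = 1) (hb : ∀ i, ‖b i‖ = 1)
    (hB : Orthonormal ℂ (fun i => eprod (a i) (b i))) :
    ∀ κ, ∃ l ν, Orthonormal ℂ ![a κ, a l, a ν] ∧
      Submodule.span ℂ {a κ, a l, a ν} = ⊤ := by
  classical
  intro κ
  haveI : NeZero (3 * d₂) := ⟨by positivity⟩
  set B : Fin (3 * d₂) → EuclideanSpace ℂ (Fin 3 × Fin d₂) := fun i => eprod (a i) (b i) with hBdef
  have haa : ∀ i, ⟪a i, a i⟫ = 1 := fun i => by
    rw [inner_self_eq_norm_sq_to_K, ha]; norm_num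
  have hbb : ∀ i, ⟪b i, b i⟫ = 1 := fun i => by
    rw [inner_self_eq_norm_sq_to_K, hb]; norm_num
  have hab : ∀ {i j}, i ≠ j → ⟪a i, a j⟫ * ⟪b i, b j⟫ = 0 := by
    intro i j hij
    have h : ⟪eprod (a i) (b i), eprod (a j) (b j)⟫ = 0 := hB.2 hij
    rwa [inner_eprod] at h
  -- the full family is an orthonormal basis
  have hcard : Fintype.card (Fin (3 * d₂)) = Module.finrank ℂ (EuclideanSpace ℂ (Fin 3 × Fin d₂)) := by
    simp [finrank_euclideanSpace]
  have hspan : ⊤ ≤ Submodule.span ℂ (Set.range B) := by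
    rw [hB.linearIndependent.span_eq_top_of_card_eq_finrank hcard]
  let OB : OrthonormalBasis (Fin (3 * d₂)) ℂ (EuclideanSpace ℂ (Fin 3 × Fin d₂)) :=
    OrthonormalBasis.mk hB hspan
  have hpars : ∀ x y : EuclideanSpace ℂ (Fin 3 × Fin d₂),
      ∑ i, ⟪x, B i⟫ * ⟪B i, y⟫ = ⟪x, y⟫ := by
    intro x y
    simpa [OB, OrthonormalBasis.coe_mk] using OB.sum_inner_mul_inner x y
  set s : Finset (Fin (3 * d₂)) := Finset.univ.filter fun i => ⟪a κ, a i⟫ = 0 with hs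
  have hmem : ∀ i, i ∈ s ↔ ⟪a κ, a i⟫ = 0 := by
    intro i; simp [hs]
  have hκs : κ ∉ s := by
    rw [hmem]; rw [haa κ]; exact one_ne_zero
  have hbz : ∀ i, i ≠ κ → i ∉ s → ⟪b i, b κ⟫ = 0 := by
    intro i hiκ his
    have h1 : ⟪a κ, a i⟫ ≠ 0 := fun hc => his ((hmem i).mpr hc)
    have h2 : ⟪a i, a κ⟫ ≠ 0 := by
      intro hc
      apply h1
      rw [← inner_conj_symm, hc, map_zero]
    have := hab hiκ
    exact (mul_eq_zero.mp this).resolve_left h2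
    -- Parseval identity with test vectors (e j) ⊗ (b κ)
  set SB := EuclideanSpace.basisFun (Fin 3) ℂ with hSBdef
  have hSBn : ∀ j, ⟪SB j, SB j⟫ = 1 := fun j => by
    rw [inner_self_eq_norm_sq_to_K, SB.orthonormal.1 j]; norm_num
  have hT3 : ∑ i, ⟪b κ, b i⟫ * ⟪b i, b κ⟫ = 3 := by
    have lhs : ∑ j, ⟪eprod (SB j) (b κ), eprod (SB j) (b κ)⟫ = 3 := by
      have : ∀ j : Fin 3, ⟪eprod (SB j) (b κ), eprod (SB j) (b κ)⟫ = 1 := fun j => by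
        rw [inner_eprod, hSBn, hbb, mul_one]
      rw [Finset.sum_congr rfl fun j _ => this j]; simp
    calc ∑ i, ⟪b κ, b i⟫ * ⟪b i, b κ⟫
        = ∑ i, (⟪b κ, b i⟫ * ⟪b i, b κ⟫) * ∑ j, ⟪a i, SB j⟫ * ⟪SB j, a i⟫ := by
          refine Finset.sum_congr rfl fun i _ => ?_
          rw [SB.sum_inner_mul_inner, haa i, mul_one]
      _ = ∑ i, ∑ j, ⟪eprod (SB j) (b κ), B i⟫ * ⟪B i, eprod (SB j) (b κ)⟫ := by
          refine Finset.sum_congr rfl fun i _ => ?_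
          rw [Finset.mul_sum]
          refine Finset.sum_congr rfl fun j _ => ?_
          show _ = ⟪eprod (SB j) (b κ), eprod (a i) (b i)⟫ * ⟪eprod (a i) (b i), eprod (SB j) (b κ)⟫
          rw [inner_eprod, inner_eprod]; ring
      _ = ∑ j, ∑ i, ⟪eprod (SB j) (b κ), B i⟫ * ⟪B i, eprod (SB j) (b κ)⟫ := Finset.sum_comm
      _ = ∑ j, ⟪eprod (SB j) (b κ), eprod (SB j) (b κ)⟫ :=
          Finset.sum_congr rfl fun j _ => hpars _ _
      _ = 3 := lhs
  have hsum2 : ∑ i ∈ s, ⟪b κ, b i⟫ * ⟪b i, b κ⟫ = 2 := by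
    have hsplit := Finset.add_sum_erase Finset.univ
      (fun i => ⟪b κ, b i⟫ * ⟪b i, b κ⟫) (Finset.mem_univ κ)
    have hsub : ∑ i ∈ s, ⟪b κ, b i⟫ * ⟪b i, b κ⟫
        = ∑ i ∈ Finset.univ.erase κ, ⟪b κ, b i⟫ * ⟪b i, b κ⟫ := by
      apply Finset.sum_subset
      · intro i hi
        exact Finset.mem_erase.mpr ⟨fun hc => hκs (hc ▸ hi), Finset.mem_univ i⟩
      · intro i hi his
        have hiκ : i ≠ κ := (Finset.mem_erase.mp hi).1
        rw [hbz i hiκ his, mul_zero]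
    have hκκ : ⟪b κ, b κ⟫ * ⟪b κ, b κ⟫ = 1 := by rw [hbb]; ring
    rw [hsub]
    have : (1 : ℂ) + ∑ i ∈ Finset.univ.erase κ, ⟪b κ, b i⟫ * ⟪b i, b κ⟫ = 3 := by
      rw [← hκκ]; rw [hsplit]; exact hT3
    linear_combination this
  have key : ∑ i ∈ s, ‖⟪b i, b κ⟫‖ ^ 2 = 2 := by
    have hc : ((∑ i ∈ s, ‖⟪b i, b κ⟫‖ ^ 2 : ℝ) : ℂ) = 2 := by
      push_cast
      rw [← hsum2]
      refine Finset.sum_congr rfl fun i _ => ?_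
      rw [← inner_conj_symm (b κ) (b i), RCLike.conj_mul]
      norm_cast
    exact_mod_cast hc
  have hex : ∃ l ∈ s, ∃ ν ∈ s, l ≠ ν ∧ ⟪a l, a ν⟫ = 0 := by
    by_contra hcon
    push_neg at hcon
    have hbo : Orthonormal ℂ (fun i : s => b i) := by
      rw [orthonormal_iff_ite]
      intro i j
      by_cases hij : i = j
      · simp [hij, hbb, hb]
      · have hne : (i : Fin (3 * d₂)) ≠ (j : Fin (3 * d₂)) := fun hc => hij (Subtype.ext hc)
        have h0 := hab hne
        have hA := hcon i i.2 j j.2 hne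
        simp only [hij, if_false]
        exact (mul_eq_zero.mp h0).resolve_left hA
    have hbes := hbo.sum_inner_products_le (b κ) (s := Finset.univ)
    have hconv : ∑ i : s, ‖⟪b (i : Fin (3 * d₂)), b κ⟫‖ ^ 2 = ∑ i ∈ s, ‖⟪b i, b κ⟫‖ ^ 2 :=
      Finset.sum_coe_sort s (fun i => ‖⟪b i, b κ⟫‖ ^ 2)
    rw [hconv, key, hb κ] at hbes
    norm_num at hbes
  obtain ⟨l, hls, ν, hνs, hlν, hoLν⟩ := hex
  have h1 : ⟪a κ, a l⟫ = 0 := (hmem l).mp hls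
  have h2 : ⟪a κ, a ν⟫ = 0 := (hmem ν).mp hνs
  have h1' : ⟪a l, a κ⟫ = 0 := by rw [← inner_conj_symm, h1, map_zero]
  have h2' : ⟪a ν, a κ⟫ = 0 := by rw [← inner_conj_symm, h2, map_zero]
  have h3' : ⟪a ν, a l⟫ = 0 := by rw [← inner_conj_symm, hoLν, map_zero]
  have hON : Orthonormal ℂ ![a κ, a l, a ν] := by
    rw [orthonormal_iff_ite]
    intro i j
    fin_cases i <;> fin_cases j <;>
      simp [haa, ha, h1, h2, h1', h2', hoLν, h3']
  refine ⟨l, ν, hON, ?_⟩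
  have hrange : Set.range ![a κ, a l, a ν] = {a κ, a l, a ν} := by
    ext x
    simp only [Matrix.range_cons, Matrix.range_empty, Set.union_empty, Set.mem_insert_iff,
      Set.mem_union, Set.mem_singleton_iff]
  rw [← hrange]
  exact hON.linearIndependent.span_eq_top_of_card_eq_finrank (by simp [finrank_euclideanSpace])
end
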